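/- Let m ≥ 2 and let M be the m×m integer matrix with M_{jj} = -1, M_{j,j+1} = a_{j+1} for j = 1,...,m-1, M_{m,1} = a_1, and zeros elsewhere, with d := det M = (-1)^m(1 - a_1⋯a_m) ≠ 0. Define b ∈ ℚ^m by b_j = ((-1)^m/d)·(a_{j+1} - 1) for j = 1,...,m-1 and b_m = ((-1)^m/d)·(a_1 - 1). Then adj(M)·b = (-1)^m·𝟙, where 𝟙 is the all-ones vector. -/

import Mathlib

theorem adjugate_mulVec_b_formula (m : ℕ) (hm : 2 ≤ m) [NeZero m]
    (a : Fin m → ℤ) (M : Matrix (Fin m) (Fin m) ℚ)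
    (hM : ∀ i j : Fin m, M i j =
      if i = j then -1 else if j = i + 1 then (a j : ℚ) else 0)
    (hd : M.det = (-1) ^ m * (1 - ∏ j, (a j : ℚ)))
    (hd0 : M.det ≠ 0)
    (b : Fin m → ℚ)
    (hb : ∀ j : Fin m, b j = ((-1) ^ m / M.det) * ((a (j + 1) : ℚ) - 1)) :
    M.adjugate.mulVec b = fun _ => (-1) ^ m := by
  have hone : (1 : Fin m) ≠ 0 := by
    intro h
    rw [Fin.one_eq_zero_iff] at h
    omega
  have hinv : Invertible M := M.invertibleOfIsUnitDet (isUnit_iff_ne_zero.mpr hd0)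
  -- key: M.mulVec (const (-1)^m) = M.det • b
  have key : M.mulVec (fun _ => ((-1) ^ m : ℚ)) = M.det • b := by
    funext i
    have hne : i ≠ i + 1 := by
      intro h
      have : (0 : Fin m) = 1 := by
        have := h
        nth_rewrite 1 [← add_zero i] at this
        exact add_left_cancel this
      exact hone this.symm
    have hsum : ∑ k, M i k = (a (i + 1) : ℚ) - 1 := by
      have hsplit : ∀ k, M i k =
          (if i = k then (-1 : ℚ) else 0) + (if k = i + 1 then (a k : ℚ) else 0) := by
        intro k
        rw [hM]
        by_cases h1 : i = k
        · subst h1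
          rw [if_pos rfl, if_pos rfl, if_neg (fun h => hne h), add_zero]
        · rw [if_neg h1, if_neg h1, zero_add]
      rw [Finset.sum_congr rfl (fun k _ => hsplit k), Finset.sum_add_distrib,
        Finset.sum_ite_eq, Finset.sum_ite_eq']
      simp
      ring
    calc M.mulVec (fun _ => ((-1) ^ m : ℚ)) i
        = ∑ k, M i k * (-1) ^ m := by simp [Matrix.mulVec, dotProduct]
      _ = ((a (i + 1) : ℚ) - 1) * (-1) ^ m := by rw [← Finset.sum_mul, hsum]
      _ = M.det • b i := by
          rw [hb i]
          field_simp
          rw [smul_eq_mul]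
          field_simp
  have h1 : M.mulVec (M.adjugate.mulVec b) = M.det • b := by
    rw [Matrix.mulVec_mulVec, Matrix.mul_adjugate]
    simp [Matrix.smul_mulVec]
  have h2 : M.mulVec (M.adjugate.mulVec b) = M.mulVec (fun _ => ((-1) ^ m : ℚ)) := by
    rw [h1, key]
  have hinj : Function.Injective M.mulVec := Matrix.mulVec_injective_of_invertible M
  exact hinj h2
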